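/- Let μ be a probability measure on ℝⁿ, let X₁, …, X_N be independent random points distributed according to μ, and let K_N = conv{X₁,…,X_N}. Then for every x ∈ ℝⁿ, the probability that x ∈ K_N satisfies μ^N(x ∈ K_N) ≤ N·φ_μ(x), where φ_μ is the half-space depth of μ. -/

import Mathlib

open MeasureTheory Real Filter
open scoped ENNReal Pointwise RealInnerProductSpace

noncomputable section

/-- The collection of closed half-spaces of `ℝⁿ` containing the point `x`. -/
def HalfSpacesAt {n : ℕ} (x : EuclideanSpace ℝ (Fin n)) : Set (Set (EuclideanSpace ℝ (Fin n))) :=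
  {H | ∃ (v : EuclideanSpace ℝ (Fin n)) (a : ℝ), v ≠ 0 ∧ H = {z | a ≤ ⟪v, z⟫} ∧ x ∈ H}

/-- Tukey's half-space depth: `φ_μ(x) = inf {μ(H) : H a closed half-space containing x}`. -/
def halfSpaceDepth {n : ℕ} (μ : Measure (EuclideanSpace ℝ (Fin n)))
    (x : EuclideanSpace ℝ (Fin n)) : ℝ≥0∞ :=
  ⨅ H ∈ HalfSpacesAt x, μ H

/-- A measure `μ` is log-concave: `μ(λA + (1-λ)B) ≥ μ(A)^λ μ(B)^(1-λ)` for compact `A, B`. -/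
def IsLogConcaveMeasure {n : ℕ} (μ : Measure (EuclideanSpace ℝ (Fin n))) : Prop :=
  ∀ A B : Set (EuclideanSpace ℝ (Fin n)), IsCompact A → IsCompact B →
    ∀ l : ℝ, 0 < l → l < 1 → μ A ^ l * μ B ^ (1 - l) ≤ μ (l • A + (1 - l) • B)

/-- Non-degenerate: every affine hyperplane has measure `< 1`. -/
def IsNonDegenerate {n : ℕ} (μ : Measure (EuclideanSpace ℝ (Fin n))) : Prop :=
  ∀ (v : EuclideanSpace ℝ (Fin n)) (a : ℝ), v ≠ 0 → μ {z | ⟪v, z⟫ = a} < 1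

/-- The covariance matrix of a measure `μ` on `ℝⁿ`. -/
def covMatrix {n : ℕ} (μ : Measure (EuclideanSpace ℝ (Fin n))) : Matrix (Fin n) (Fin n) ℝ :=
  Matrix.of fun i j => (∫ x, x i * x j ∂μ) - (∫ x, x i ∂μ) * (∫ x, x j ∂μ)

/-- A measure is centered if `∫ ⟨ξ, x⟩ dμ(x) = 0` for all `ξ`. -/
def IsCentered {n : ℕ} (μ : Measure (EuclideanSpace ℝ (Fin n))) : Prop :=
  ∀ ξ : EuclideanSpace ℝ (Fin n), ∫ x, ⟪ξ, x⟫ ∂μ = 0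

/-- A measure is isotropic if it is centered and its covariance matrix is the identity. -/
def IsIsotropic {n : ℕ} (μ : Measure (EuclideanSpace ℝ (Fin n))) : Prop :=
  IsCentered μ ∧ covMatrix μ = 1

/-- The isotropic constant `L_μ = ‖f‖_∞^(1/n) · (det Cov μ)^(1/(2n))` of a measure `μ`
with density `f`. -/
def isoConst (n : ℕ) (f : EuclideanSpace ℝ (Fin n) → ℝ)
    (μ : Measure (EuclideanSpace ℝ (Fin n))) : ℝ :=
  (essSup f volume) ^ ((1 : ℝ)/n) * (covMatrix μ).det ^ ((1 : ℝ)/(2*n))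

/-- The logarithmic Laplace transform `Λ_μ(u) = ln ∫ e^⟨u,x⟩ dμ(x)` (with values in `EReal`). -/
def logLaplace {n : ℕ} (μ : Measure (EuclideanSpace ℝ (Fin n)))
    (u : EuclideanSpace ℝ (Fin n)) : EReal :=
  ENNReal.log (∫⁻ x, ENNReal.ofReal (Real.exp ⟪u, x⟫) ∂μ)

/-- The Cramér transform `Λ*_μ(x) = sup_u (⟨x,u⟩ − Λ_μ(u))`. -/
def cramer {n : ℕ} (μ : Measure (EuclideanSpace ℝ (Fin n)))
    (x : EuclideanSpace ℝ (Fin n)) : EReal :=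
  ⨆ u : EuclideanSpace ℝ (Fin n), ((⟪x, u⟫ : ℝ) : EReal) - logLaplace μ u

/-- `B_t(μ) = {x : Λ*_μ(x) ≤ t}`. -/
def Bset {n : ℕ} (μ : Measure (EuclideanSpace ℝ (Fin n))) (t : ℝ) :
    Set (EuclideanSpace ℝ (Fin n)) :=
  {x | cramer μ x ≤ (t : EReal)}

/-- The one-sided `L_t`-centroid body `Z_t⁺(μ)`, described via its support function
`h(y) = (∫ ⟨y,z⟩₊^t dμ(z))^(1/t)`. -/
def Zplus {n : ℕ} (μ : Measure (EuclideanSpace ℝ (Fin n))) (t : ℝ) :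
    Set (EuclideanSpace ℝ (Fin n)) :=
  {x | ∀ y : EuclideanSpace ℝ (Fin n),
    ⟪y, x⟫ ≤ (∫ z, (max ⟪y, z⟫ 0) ^ t ∂μ) ^ (1/t)}

/-- The `L_t`-centroid body `Z_t(μ) = {x : |⟨v,x⟩|^t ≤ ∫ |⟨v,y⟩|^t dμ(y) for all v}`. -/
def Zbody {n : ℕ} (μ : Measure (EuclideanSpace ℝ (Fin n))) (t : ℝ) :
    Set (EuclideanSpace ℝ (Fin n)) :=
  {x | ∀ v : EuclideanSpace ℝ (Fin n), |⟪v, x⟫| ^ t ≤ ∫ y, |⟪v, y⟫| ^ t ∂μ}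

/-- `μ` is `α`-regular. -/
def IsRegularMeasure {n : ℕ} (μ : Measure (EuclideanSpace ℝ (Fin n))) (α : ℝ) : Prop :=
  ∀ s t : ℝ, 2 ≤ t → t ≤ s → ∀ v : EuclideanSpace ℝ (Fin n),
    (∫ x, |⟪v, x⟫| ^ s ∂μ) ^ (1/s) ≤ α * (s / t) * (∫ x, |⟪v, x⟫| ^ t ∂μ) ^ (1/t)

/-- Ball's body `K_t(f)`, the star body with radial function
`ρ(x) = ((1/f(0)) ∫₀^∞ t r^(t-1) f(rx) dr)^(1/t)`. -/
def BallBody {n : ℕ} (f : EuclideanSpace ℝ (Fin n) → ℝ) (t : ℝ) :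
    Set (EuclideanSpace ℝ (Fin n)) :=
  {x | f 0 / t ≤ ∫ r in Set.Ioi (0 : ℝ), r ^ (t - 1) * f (r • x)}

/-- `R_t(μ) = {x : f_μ(x) ≥ e^{-t} f_μ(0)}`. -/
def Rset {n : ℕ} (f : EuclideanSpace ℝ (Fin n) → ℝ) (t : ℝ) :
    Set (EuclideanSpace ℝ (Fin n)) :=
  {x | Real.exp (-t) * f 0 ≤ f x}

/-- `μ^N(x ∈ K_N) ≤ N·φ_μ(x)`. -/
theorem prob_mem_random_polytope_le (n N : ℕ) (μ : Measure (EuclideanSpace ℝ (Fin n)))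
    [IsProbabilityMeasure μ] (x : EuclideanSpace ℝ (Fin n)) :
    (Measure.pi fun _ : Fin N => μ) {ω | x ∈ convexHull ℝ (Set.range ω)} ≤
      N * halfSpaceDepth μ x := by
  rcases Nat.eq_zero_or_pos N with hN | hN
  · subst hN
    have : {ω : Fin 0 → EuclideanSpace ℝ (Fin n) | x ∈ convexHull ℝ (Set.range ω)} = ∅ := by
      ext ω
      simp [Set.range_eq_empty, convexHull_empty]
    simp [this]
  -- main case
  have key : ∀ H ∈ HalfSpacesAt x,
      (Measure.pi fun _ : Fin N => μ) {ω | x ∈ convexHull ℝ (Set.range ω)} ≤ N * μ H := by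
    rintro H ⟨v, a, hv, rfl, hxH⟩
    have hHmeas : MeasurableSet {z : EuclideanSpace ℝ (Fin n) | a ≤ ⟪v, z⟫} := by
      have : Continuous fun z : EuclideanSpace ℝ (Fin n) => (⟪v, z⟫ : ℝ) :=
        (innerSL ℝ v).continuous
      exact measurableSet_le measurable_const this.measurable
    have hsub : {ω : Fin N → EuclideanSpace ℝ (Fin n) | x ∈ convexHull ℝ (Set.range ω)} ⊆
        ⋃ i : Fin N, {ω | ω i ∈ {z | a ≤ ⟪v, z⟫}} := by
      intro ω hω
      by_contra hc
      simp only [Set.mem_iUnion, Set.mem_setOf_eq, not_exists, not_le] at hc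
      have hconv : Convex ℝ {z : EuclideanSpace ℝ (Fin n) | ⟪v, z⟫ < a} :=
        convex_halfSpace_lt (innerSL ℝ v).toLinearMap.isLinear a
      have : x ∈ {z : EuclideanSpace ℝ (Fin n) | ⟪v, z⟫ < a} := by
        refine convexHull_min ?_ hconv hω
        rintro z ⟨i, rfl⟩
        exact hc i
      exact absurd hxH (by simpa using not_le.mpr this)
    calc (Measure.pi fun _ : Fin N => μ) {ω | x ∈ convexHull ℝ (Set.range ω)}
        ≤ (Measure.pi fun _ : Fin N => μ) (⋃ i : Fin N, {ω | ω i ∈ {z | a ≤ ⟪v, z⟫}}) :=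
          measure_mono hsub
      _ ≤ ∑ i : Fin N, (Measure.pi fun _ : Fin N => μ)
            {ω | ω i ∈ {z : EuclideanSpace ℝ (Fin n) | a ≤ ⟪v, z⟫}} :=
          measure_iUnion_fintype_le _ _
      _ = ∑ _i : Fin N, μ {z : EuclideanSpace ℝ (Fin n) | a ≤ ⟪v, z⟫} := by
          refine Finset.sum_congr rfl fun i _ => ?_
          have : {ω : Fin N → EuclideanSpace ℝ (Fin n) |
              ω i ∈ {z : EuclideanSpace ℝ (Fin n) | a ≤ ⟪v, z⟫}} =
              Set.pi Set.univ (Function.update (fun _ : Fin N => Set.univ) i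
                {z : EuclideanSpace ℝ (Fin n) | a ≤ ⟪v, z⟫}) := by
            rw [← Set.eval_preimage]
            rfl
          rw [this, Measure.pi_pi]
          have : ∀ j : Fin N, μ (Function.update (fun _ : Fin N => Set.univ) i
              {z : EuclideanSpace ℝ (Fin n) | a ≤ ⟪v, z⟫} j) =
              if j = i then μ {z : EuclideanSpace ℝ (Fin n) | a ≤ ⟪v, z⟫} else 1 := by
            intro j
            by_cases hj : j = i
            · subst hj; simp
            · simp [Function.update_of_ne hj, hj]
          simp only [this]
          simp
      _ = N * μ {z : EuclideanSpace ℝ (Fin n) | a ≤ ⟪v, z⟫} := by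
          simp [mul_comm]
  rcases Set.eq_empty_or_nonempty (HalfSpacesAt x) with hS | hS
  · have : halfSpaceDepth μ x = ⊤ := by
      simp [halfSpaceDepth, hS]
    rw [this, ENNReal.mul_top (by exact_mod_cast hN.ne')]
    exact le_top
  · have hdepth : (N : ℝ≥0∞) * halfSpaceDepth μ x =
        ⨅ H : HalfSpacesAt x, (N : ℝ≥0∞) * μ H := by
      rw [halfSpaceDepth, iInf_subtype']
      exact ENNReal.mul_iInf_of_ne (by exact_mod_cast hN.ne') (by simp)
        (f := fun H : HalfSpacesAt x => μ H)
    rw [hdepth]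
    exact le_iInf fun H => key H H.2

end
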